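/- arXiv:1201.2283 — 2 statements merged into one kernel-verified Lean document; each statement's English description precedes it below -/
import Mathlib

section
/- Localization of the large eigenvalues of R: For any given ε > 0 and s > 0 there is some a > 0, depending only on ε and s, such that for any N ≥ 1, the set { k ∈ ⟦1, 2N⟧ : |ν_k| > s } is contained in ⟦1, a⟧ ∪ ⟦2N+1−a, 2N⟧. -/
open MeasureTheory Real Finset

noncomputable section

/-- The representative of n modulo 2N lying in ⟦−N+1, N⟧. -/
def mmod (N : ℕ) (n : ℤ) : ℤ := (n + ((N : ℤ) - 1)) % (2 * (N : ℤ)) - ((N : ℤ) - 1)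

/-- The translation-invariant distance d(k,ℓ) = |m(k−ℓ)| on ⟦−N+1,N⟧ viewed modulo 2N. -/
def refDist (N : ℕ) (k l : ℤ) : ℤ := |mmod N (k - l)|

/-- The circulant matrix R^{(ε)}_{k,ℓ} = (1/N) ε^{2/3}/(d(k,ℓ)²/N² + ε²). -/
def Rmat (ε : ℝ) (N : ℕ) (k l : ℤ) : ℝ :=
  (1 / (N : ℝ)) * ε ^ ((2 : ℝ) / 3) / (((refDist N k l : ℤ) : ℝ) ^ 2 / (N : ℝ) ^ 2 + ε ^ 2)

/-- The reflected matrix Q^{(ε)}_{i,j}. -/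
def Qmat (ε : ℝ) (N : ℕ) (i j : ℤ) : ℝ :=
  Rmat ε N i j + Rmat ε N (1 - i) j + Rmat ε N i (1 - j) + Rmat ε N (1 - i) (1 - j)
/-- The eigenvalues ν_k of the circulant matrix R^{(ε)}. -/
def nuEig (ε : ℝ) (N : ℕ) (k : ℤ) : ℂ :=
  ∑ j ∈ Finset.range (2 * N),
    Complex.exp (Complex.I * 2 * (π : ℂ) * (j : ℂ) * (k : ℂ) / (2 * (N : ℂ))) *
      ((Rmat ε N 0 (j : ℤ) : ℝ) : ℂ)

/-- The normalized eigenvector u_k of the circulant matrix R^{(ε)}. -/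
def uVec (N : ℕ) (k j : ℤ) : ℂ :=
  ((Real.sqrt (2 * N) : ℝ) : ℂ)⁻¹ *
    Complex.exp (Complex.I * 2 * (π : ℂ) * (j : ℂ) * (k : ℂ) / (2 * (N : ℂ)))

/-! ### Auxiliary lemmas -/

/-- The Lorentzian profile as a function of the distance. -/
def lorz (ε : ℝ) (N : ℕ) (d : ℤ) : ℝ :=
  1 / (N : ℝ) * ε ^ ((2 : ℝ) / 3) / ((d : ℝ) ^ 2 / (N : ℝ) ^ 2 + ε ^ 2)

lemma Rmat_eq_lorz (ε : ℝ) (N : ℕ) (k l : ℤ) : Rmat ε N k l = lorz ε N (refDist N k l) := rfl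

lemma lorz_nonneg (ε : ℝ) (hε : 0 < ε) (N : ℕ) (d : ℤ) : 0 ≤ lorz ε N d := by
  unfold lorz
  apply div_nonneg
  · exact mul_nonneg (by positivity) (Real.rpow_nonneg hε.le _)
  · positivity

lemma lorz_anti (ε : ℝ) (hε : 0 < ε) (N : ℕ) (hN : 1 ≤ N) {d e : ℤ}
    (hd : 0 ≤ d) (hde : d ≤ e) : lorz ε N e ≤ lorz ε N d := by
  unfold lorz
  have hNR : (0:ℝ) < N := by exact_mod_cast hN
  have h1 : ((d:ℝ)) ^ 2 ≤ (e:ℝ) ^ 2 := by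
    have h2 : (d:ℝ) ≤ e := by exact_mod_cast hde
    have hd' : (0:ℝ) ≤ d := by exact_mod_cast hd
    nlinarith
  apply div_le_div_of_nonneg_left
  · exact mul_nonneg (by positivity) (Real.rpow_nonneg hε.le _)
  · positivity
  · gcongr

lemma refDist_zero_eq (N : ℕ) (j : ℕ) (hj : j < 2 * N) :
    refDist N 0 (j : ℤ) = min (j : ℤ) (2 * (N : ℤ) - j) := by
  have hN : 1 ≤ N := by omega
  have hj' : (j : ℤ) < 2 * N := by exact_mod_cast hj
  have hj0 : (0:ℤ) ≤ j := Int.natCast_nonneg j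
  have hNZ : (1:ℤ) ≤ N := by exact_mod_cast hN
  unfold refDist mmod
  rcases le_or_gt (j : ℤ) ((N : ℤ) - 1) with h | h
  · rw [Int.emod_eq_of_lt (by omega) (by omega)]
    rw [show (0 - (j:ℤ) + ((N:ℤ) - 1) - ((N:ℤ) - 1)) = -(j:ℤ) by ring, abs_neg,
      abs_of_nonneg hj0]
    omega
  · rw [← Int.add_mul_emod_self_left (a := 0 - (j:ℤ) + ((N:ℤ) - 1)) (b := 2 * (N:ℤ)) (c := 1),
      Int.emod_eq_of_lt (by omega) (by omega)]
    rw [abs_of_nonneg (by omega)]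
    omega

lemma tv_bound (ε : ℝ) (hε : 0 < ε) (N : ℕ) (hN : 1 ≤ N) :
    ∑ i ∈ Finset.range (2 * N - 1),
      |Rmat ε N 0 ((i + 1 : ℕ) : ℤ) - Rmat ε N 0 ((i : ℕ) : ℤ)| ≤ 2 * lorz ε N 0 := by
  have hval : ∀ j : ℕ, j < 2 * N → Rmat ε N 0 (j : ℤ) = lorz ε N (min (j:ℤ) (2*(N:ℤ) - j)) := by
    intro j hj
    rw [Rmat_eq_lorz, refDist_zero_eq N j hj]
  have hsplit : 2 * N - 1 = N + (N - 1) := by omega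
  rw [hsplit, Finset.range_eq_Ico,
    ← Finset.sum_Ico_consecutive _ (Nat.zero_le N) (by omega : N ≤ N + (N - 1)),
    Finset.sum_Ico_eq_sum_range, Finset.sum_Ico_eq_sum_range]
  simp only [Nat.sub_zero, Nat.add_sub_cancel_left, zero_add]
  have h1 : ∑ i ∈ Finset.range N,
      |Rmat ε N 0 ((i + 1 : ℕ) : ℤ) - Rmat ε N 0 ((i : ℕ) : ℤ)|
      = ∑ i ∈ Finset.range N,
        (lorz ε N ((i : ℕ) : ℤ) - lorz ε N ((i + 1 : ℕ) : ℤ)) := by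
    refine Finset.sum_congr rfl fun i hi => ?_
    simp only [Finset.mem_range] at hi
    rw [hval (i+1) (by omega), hval i (by omega)]
    have e1 : min (((i+1 : ℕ)):ℤ) (2*(N:ℤ) - ((i+1 : ℕ):ℤ)) = ((i+1 : ℕ) : ℤ) := by
      push_cast; omega
    have e2 : min (((i : ℕ)):ℤ) (2*(N:ℤ) - ((i : ℕ):ℤ)) = ((i : ℕ) : ℤ) := by
      push_cast; omega
    rw [e1, e2, abs_of_nonpos (sub_nonpos.mpr (lorz_anti ε hε N hN
      (Int.natCast_nonneg i) (by push_cast; omega)))]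
    ring
  have h2 : ∑ i ∈ Finset.range (N - 1),
      |Rmat ε N 0 ((N + i + 1 : ℕ) : ℤ) - Rmat ε N 0 ((N + i : ℕ) : ℤ)|
      = ∑ i ∈ Finset.range (N - 1),
        (lorz ε N ((N:ℤ) - ((i + 1 : ℕ) : ℤ)) - lorz ε N ((N:ℤ) - ((i : ℕ) : ℤ))) := by
    refine Finset.sum_congr rfl fun i hi => ?_
    simp only [Finset.mem_range] at hi
    rw [hval (N + i + 1) (by omega), hval (N + i) (by omega)]
    have e1 : min (((N + i + 1 : ℕ)):ℤ) (2*(N:ℤ) - ((N + i + 1 : ℕ):ℤ))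
        = (N:ℤ) - ((i + 1 : ℕ) : ℤ) := by push_cast; omega
    have e2 : min (((N + i : ℕ)):ℤ) (2*(N:ℤ) - ((N + i : ℕ):ℤ))
        = (N:ℤ) - ((i : ℕ) : ℤ) := by push_cast; omega
    rw [e1, e2, abs_of_nonneg (sub_nonneg.mpr (lorz_anti ε hε N hN
      (by push_cast; omega) (by push_cast; omega)))]
  rw [h1, h2]
  rw [Finset.sum_range_sub' (fun n : ℕ => lorz ε N (n : ℤ)) N]
  rw [show (fun i => lorz ε N ((N:ℤ) - ((i + 1 : ℕ) : ℤ)) - lorz ε N ((N:ℤ) - ((i : ℕ) : ℤ)))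
      = (fun i => (fun n : ℕ => lorz ε N ((N:ℤ) - (n : ℤ))) (i + 1)
        - (fun n : ℕ => lorz ε N ((N:ℤ) - (n : ℤ))) i) from rfl,
    Finset.sum_range_sub (fun n : ℕ => lorz ε N ((N:ℤ) - (n : ℤ))) (N - 1)]
  have e3 : (N:ℤ) - ((N - 1 : ℕ) : ℤ) = 1 := by push_cast; omega
  have e4 : (N:ℤ) - ((0 : ℕ) : ℤ) = (N:ℤ) := by push_cast; ring
  rw [e3, e4]
  have h5 : lorz ε N ((N:ℕ):ℤ) = lorz ε N (N:ℤ) := by norm_cast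
  have h6 := lorz_nonneg ε hε N (N:ℤ)
  have h7 := lorz_anti ε hε N hN (le_refl (0:ℤ)) (by omega : (0:ℤ) ≤ 1)
  have h8 : lorz ε N ((0:ℕ):ℤ) = lorz ε N 0 := by norm_cast
  rw [h5, h8]
  linarith

lemma sin_lower (N : ℕ) (hN : 1 ≤ N) (j : ℤ) (h1 : 1 ≤ j) (h2 : j ≤ N) :
    (j : ℝ) / N ≤ Real.sin (π * j / (2 * N)) := by
  have hNR : (0:ℝ) < N := by exact_mod_cast hN
  have hjR : (1:ℝ) ≤ (j:ℝ) := by exact_mod_cast h1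
  have hjN : (j:ℝ) ≤ N := by exact_mod_cast h2
  have hx0 : 0 ≤ π * j / (2 * N) :=
    div_nonneg (mul_nonneg pi_pos.le (by linarith)) (by positivity)
  have hx1 : π * j / (2 * N) ≤ π / 2 := by
    rw [div_le_div_iff₀ (by positivity) (by norm_num)]
    nlinarith [pi_pos]
  have h := Real.mul_le_sin hx0 hx1
  have heq : 2 / π * (π * j / (2 * N)) = (j:ℝ) / N := by
    field_simp
  rw [heq] at h
  exact h

lemma nu_bound (ε : ℝ) (hε : 0 < ε) (N : ℕ) (hN : 1 ≤ N) (k : ℤ)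
    (hk1 : 1 ≤ k) (hk2 : k ≤ 2 * (N : ℤ) - 1) :
    ‖nuEig ε N k‖ ≤
      (2 * ε ^ ((2:ℝ)/3) / ε ^ 2) / ((min k (2 * (N:ℤ) - k) : ℤ) : ℝ) := by
  have hNR : (0:ℝ) < N := by exact_mod_cast hN
  have hNC : (N:ℂ) ≠ 0 := Nat.cast_ne_zero.mpr (by omega)
  set m : ℤ := min k (2 * (N:ℤ) - k) with hm
  have hm1 : 1 ≤ m := by omega
  have hmN : m ≤ N := by omega
  have hmR : (1:ℝ) ≤ (m:ℝ) := by exact_mod_cast hm1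
  have hmpos : (0:ℝ) < (m:ℝ) := by linarith
  set θ : ℝ := π * k / N with hθ
  set φ : ℝ := π * k / (2 * N) with hφ
  set ω : ℂ := Complex.exp ((θ:ℂ) * Complex.I) with hω
  -- sine lower bound
  have hsin : (m:ℝ) / N ≤ Real.sin φ := by
    rcases le_or_gt k (N:ℤ) with h | h
    · refine le_trans ?_ (sin_lower N hN k hk1 h)
      gcongr
      exact_mod_cast min_le_left _ _
    · have h2N : (1:ℤ) ≤ 2*(N:ℤ) - k := by omega
      have h2N' : 2*(N:ℤ) - k ≤ (N:ℤ) := by omega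
      have hthis := sin_lower N hN (2*(N:ℤ) - k) h2N h2N'
      have hre : π * ((2*(N:ℤ) - k : ℤ):ℝ) / (2 * N) = π - φ := by
        rw [hφ]; push_cast; field_simp
      rw [hre, Real.sin_pi_sub] at hthis
      refine le_trans ?_ hthis
      gcongr
      exact_mod_cast min_le_right _ _
  have hsin0 : 0 ≤ Real.sin φ := by
    have : (0:ℝ) ≤ (m:ℝ)/N := div_nonneg (by linarith) hNR.le
    linarith
  -- |ω - 1| = 2 sin φ
  have hθφ : θ = 2 * φ := by rw [hθ, hφ]; field_simp
  have hωre : ω = ((Real.cos θ : ℝ) : ℂ) + ((Real.sin θ : ℝ) : ℂ) * Complex.I := by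
    rw [hω, Complex.exp_mul_I, Complex.ofReal_cos, Complex.ofReal_sin]
  have habs2 : ‖ω - 1‖ ^ 2 = 2 - 2 * Real.cos θ := by
    rw [Complex.sq_norm, hωre, Complex.normSq_apply]
    simp only [Complex.add_re, Complex.sub_re, Complex.add_im, Complex.sub_im,
      Complex.ofReal_re, Complex.ofReal_im, Complex.mul_re, Complex.mul_im,
      Complex.I_re, Complex.I_im, Complex.one_re, Complex.one_im]
    nlinarith [Real.sin_sq_add_cos_sq θ]
  have habs : ‖ω - 1‖ = 2 * Real.sin φ := by
    have h4 : ‖ω - 1‖ ^ 2 = (2 * Real.sin φ) ^ 2 := by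
      rw [habs2, hθφ, Real.cos_two_mul]
      nlinarith [Real.sin_sq_add_cos_sq φ]
    calc ‖ω - 1‖ = Real.sqrt (‖ω - 1‖ ^ 2) :=
          (Real.sqrt_sq (norm_nonneg _)).symm
      _ = Real.sqrt ((2 * Real.sin φ) ^ 2) := by rw [h4]
      _ = 2 * Real.sin φ := Real.sqrt_sq (by linarith)
  have hωlb : 2 * ((m:ℝ) / N) ≤ ‖ω - 1‖ := by
    rw [habs]; linarith
  have hωpos : 0 < ‖ω - 1‖ := by
    have : (0:ℝ) < (m:ℝ)/N := div_pos hmpos hNR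
    linarith
  have hω1 : ω ≠ 1 := by
    intro h
    rw [h, sub_self] at hωpos
    simp at hωpos
  have hωabs1 : ‖ω‖ = 1 := by
    rw [hω, Complex.norm_exp]
    simp
  have hωpow : ω ^ (2 * N) = 1 := by
    rw [hω, ← Complex.exp_nat_mul]
    rw [show ((2 * N : ℕ) : ℂ) * ((θ:ℝ) * Complex.I) = (k:ℂ) * (2 * (π:ℂ) * Complex.I) from by
      rw [hθ]; push_cast; field_simp]
    exact Complex.exp_int_mul_two_pi_mul_I k
  have hS0 : ∑ j ∈ Finset.range (2 * N), ω ^ j = 0 := by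
    rw [geom_sum_eq hω1, hωpow, sub_self, zero_div]
  have hSle : ∀ n : ℕ, ‖∑ j ∈ Finset.range n, ω ^ j‖ ≤ 2 / ‖ω - 1‖ := by
    intro n
    rw [geom_sum_eq hω1, norm_div]
    gcongr
    have h6 : ‖ω ^ n - 1‖ ≤ ‖ω ^ n‖ + ‖(1:ℂ)‖ := norm_sub_le _ _
    simp only [norm_pow, hωabs1, one_pow, norm_one] at h6
    linarith
  -- rewrite nuEig with ω powers
  set fC : ℕ → ℂ := fun j => ((Rmat ε N 0 (j:ℤ) : ℝ) : ℂ) with hfC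
  have hnu : nuEig ε N k = ∑ j ∈ Finset.range (2 * N), fC j • (ω ^ j) := by
    unfold nuEig
    refine Finset.sum_congr rfl fun j hj => ?_
    rw [smul_eq_mul, mul_comm, hfC]
    congr 1
    rw [hω, ← Complex.exp_nat_mul]
    congr 1
    rw [hθ]
    push_cast
    field_simp
  have hparts := Finset.sum_range_by_parts fC (fun j => ω ^ j) (2 * N)
  simp only [hS0, smul_zero, zero_sub, smul_eq_mul] at hparts
  have hnu' : nuEig ε N k =
      - ∑ i ∈ Finset.range (2 * N - 1), (fC (i + 1) - fC i) * ∑ j ∈ Finset.range (i + 1), ω ^ j := by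
    rw [hnu]
    simpa using hparts
  -- bound
  have hbound : ‖nuEig ε N k‖ ≤
      (∑ i ∈ Finset.range (2 * N - 1),
        |Rmat ε N 0 ((i + 1 : ℕ) : ℤ) - Rmat ε N 0 ((i : ℕ) : ℤ)|) * (2 / ‖ω - 1‖) := by
    rw [hnu', norm_neg]
    refine le_trans (norm_sum_le _ _) ?_
    rw [Finset.sum_mul]
    refine Finset.sum_le_sum fun i hi => ?_
    rw [norm_mul]
    have hre : ‖fC (i + 1) - fC i‖
        = |Rmat ε N 0 ((i + 1 : ℕ) : ℤ) - Rmat ε N 0 ((i : ℕ) : ℤ)| := by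
      rw [hfC]
      simp only []
      rw [← Complex.ofReal_sub, Complex.norm_real, Real.norm_eq_abs]
    rw [hre]
    exact mul_le_mul_of_nonneg_left (hSle (i + 1)) (abs_nonneg _)
  have htv := tv_bound ε hε N hN
  have h2 : 2 / ‖ω - 1‖ ≤ (N:ℝ) / (m:ℝ) := by
    rw [div_le_div_iff₀ hωpos hmpos]
    have h7 : 2 * ((m:ℝ) / N) * N = 2 * (m:ℝ) := by field_simp
    nlinarith [mul_le_mul_of_nonneg_right hωlb hNR.le]
  have hfin : ‖nuEig ε N k‖ ≤ (2 * lorz ε N 0) * ((N:ℝ) / (m:ℝ)) := by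
    refine le_trans hbound (mul_le_mul htv h2 (by positivity) ?_)
    have := lorz_nonneg ε hε N 0
    linarith
  have heq : (2 * lorz ε N 0) * ((N:ℝ) / (m:ℝ)) = (2 * ε ^ ((2:ℝ)/3) / ε ^ 2) / (m:ℝ) := by
    unfold lorz
    have hN0 : (N:ℝ) ≠ 0 := hNR.ne'
    have hm0 : (m:ℝ) ≠ 0 := hmpos.ne'
    have hε0 : ε ≠ 0 := hε.ne'
    push_cast
    field_simp
    ring
  rw [heq] at hfin
  exact hfin

/-- Localization of the large eigenvalues of R^{(ε)}: all eigenvalues of modulus larger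
than s have index within a bounded distance from 0 or 2N. -/
theorem large_eigenvalue_localization (ε s : ℝ) (hε : 0 < ε) (hs : 0 < s) :
    ∃ a : ℝ, 0 < a ∧ ∀ (N : ℕ), 1 ≤ N → ∀ k ∈ Finset.Icc (1 : ℤ) (2 * (N : ℤ)),
      s < ‖nuEig ε N k‖ → ((k : ℝ) ≤ a ∨ 2 * (N : ℝ) + 1 - a ≤ (k : ℝ)) := by
  have hE : (0:ℝ) < ε ^ ((2:ℝ)/3) := Real.rpow_pos_of_pos hε _
  have hC : (0:ℝ) < 2 * ε ^ ((2:ℝ)/3) / ε ^ 2 := by positivity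
  refine ⟨2 * ε ^ ((2:ℝ)/3) / ε ^ 2 / s + 1, by positivity, ?_⟩
  intro N hN k hk hbig
  rw [Finset.mem_Icc] at hk
  have hCs : (0:ℝ) ≤ 2 * ε ^ ((2:ℝ)/3) / ε ^ 2 / s := by positivity
  by_cases htop : k = 2 * (N:ℤ)
  · right
    rw [htop]
    push_cast
    linarith
  · have hk2 : k ≤ 2 * (N:ℤ) - 1 := by omega
    have hb := nu_bound ε hε N hN k hk.1 hk2
    set m : ℤ := min k (2 * (N:ℤ) - k) with hm
    have hm1 : 1 ≤ m := by omega
    have hmR : (1:ℝ) ≤ (m:ℝ) := by exact_mod_cast hm1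
    have hmpos : (0:ℝ) < (m:ℝ) := by linarith
    have hlt : (m:ℝ) < 2 * ε ^ ((2:ℝ)/3) / ε ^ 2 / s := by
      have h1 : s < (2 * ε ^ ((2:ℝ)/3) / ε ^ 2) / (m:ℝ) := lt_of_lt_of_le hbig hb
      rw [lt_div_iff₀ hmpos] at h1
      rw [lt_div_iff₀ hs]
      nlinarith
    rcases le_or_gt k (2 * (N:ℤ) - k) with h | h
    · left
      have hmk : m = k := by omega
      have : (k:ℝ) = (m:ℝ) := by exact_mod_cast hmk.symm
      linarith
    · right
      have hmk : m = 2 * (N:ℤ) - k := by omega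
      have h3 : ((2 * (N:ℤ) - k : ℤ):ℝ) < 2 * ε ^ ((2:ℝ)/3) / ε ^ 2 / s := by
        rw [← hmk]; exact_mod_cast hlt
      push_cast at h3
      linarith
end
end

section
/- Summation by parts bound for the eigenvalues of R: There is a constant c(ε) > 0 depending only on ε such that for any N ≥ 1 and any k ∈ ⟦1, 2N−1⟧, |ν_k| ≤ c(ε) / ( N |1 − e^{i 2π k/(2N)}| ). -/
open MeasureTheory Real Finset

noncomputable section

lemma mmod_eq (N : ℕ) (n : ℤ) (h0 : -(N:ℤ)+1 ≤ n) (h1 : n ≤ N) : mmod N n = n := by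
  unfold mmod
  have h2 : (n + ((N:ℤ)-1)) % (2*(N:ℤ)) = n + ((N:ℤ)-1) :=
    Int.emod_eq_of_lt (by omega) (by omega)
  omega

lemma mmod_add (N : ℕ) (n : ℤ) : mmod N (n + 2*(N:ℤ)) = mmod N n := by
  unfold mmod
  congr 1
  have h : n + 2*(N:ℤ) + ((N:ℤ)-1) = (n + ((N:ℤ)-1)) + (2*(N:ℤ))*1 := by ring
  rw [h, Int.add_mul_emod_self_left]

lemma refDist_low (N : ℕ) (hN : 1 ≤ N) (j : ℤ) (h0 : 0 ≤ j) (h1 : j ≤ (N:ℤ)) :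
    refDist N 0 j = j := by
  unfold refDist
  have h : (0:ℤ) - j = -j := by ring
  rw [h]
  by_cases hc : j ≤ (N:ℤ) - 1
  · rw [mmod_eq N (-j) (by omega) (by omega), abs_neg, abs_of_nonneg h0]
  · have hj : j = (N:ℤ) := by omega
    subst hj
    have h2 : mmod N (-(N:ℤ)) = mmod N ((-(N:ℤ)) + 2*(N:ℤ)) := (mmod_add N _).symm
    have h3 : (-(N:ℤ)) + 2*(N:ℤ) = (N:ℤ) := by ring
    rw [h2, h3, mmod_eq N (N:ℤ) (by omega) (by omega), abs_of_nonneg (by omega)]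

lemma refDist_high (N : ℕ) (hN : 1 ≤ N) (j : ℤ) (h0 : (N:ℤ) ≤ j) (h1 : j ≤ 2*(N:ℤ)) :
    refDist N 0 j = 2*(N:ℤ) - j := by
  unfold refDist
  have h2 : mmod N ((0:ℤ) - j) = mmod N (2*(N:ℤ) - j) := by
    have := mmod_add N ((0:ℤ) - j)
    rw [← this]
    congr 1; ring
  rw [h2, mmod_eq N _ (by omega) (by omega), abs_of_nonneg (by omega)]

lemma refDist_neg_one (N : ℕ) (hN : 1 ≤ N) : refDist N 0 (-1) = 1 := by
  unfold refDist
  have h : (0:ℤ) - (-1) = 1 := by ring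
  rw [h, mmod_eq N 1 (by omega) (by omega)]
  norm_num

/-- The profile function. -/
def gfun (ε : ℝ) (N : ℕ) (t : ℤ) : ℝ :=
  (1 / (N : ℝ)) * ε ^ ((2 : ℝ) / 3) / (((t:ℝ)) ^ 2 / (N : ℝ) ^ 2 + ε ^ 2)

lemma Rmat_low (ε : ℝ) (N : ℕ) (hN : 1 ≤ N) (j : ℤ) (h0 : 0 ≤ j) (h1 : j ≤ (N:ℤ)) :
    Rmat ε N 0 j = gfun ε N j := by
  unfold Rmat gfun
  rw [refDist_low N hN j h0 h1]

lemma Rmat_high (ε : ℝ) (N : ℕ) (hN : 1 ≤ N) (j : ℤ) (h0 : (N:ℤ) ≤ j) (h1 : j ≤ 2*(N:ℤ)) :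
    Rmat ε N 0 j = gfun ε N (2*(N:ℤ) - j) := by
  unfold Rmat gfun
  rw [refDist_high N hN j h0 h1]

lemma Rmat_neg_one (ε : ℝ) (N : ℕ) (hN : 1 ≤ N) : Rmat ε N 0 (-1) = gfun ε N 1 := by
  unfold Rmat gfun
  rw [refDist_neg_one N hN]

lemma gfun_nonneg (ε : ℝ) (hε : 0 < ε) (N : ℕ) (t : ℤ) : 0 ≤ gfun ε N t := by
  unfold gfun
  have h1 : (0:ℝ) ≤ (1 / (N : ℝ)) * ε ^ ((2 : ℝ) / 3) := by positivity
  have h2 : (0:ℝ) < ((t:ℝ)) ^ 2 / (N : ℝ) ^ 2 + ε ^ 2 := by positivity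
  positivity

lemma gfun_anti (ε : ℝ) (hε : 0 < ε) (N : ℕ) (hN : 1 ≤ N) {s t : ℤ} (hs : 0 ≤ s)
    (hst : s ≤ t) : gfun ε N t ≤ gfun ε N s := by
  unfold gfun
  have hNpos : (0:ℝ) < (N:ℝ) := by exact_mod_cast hN
  have hd : ((s:ℝ)) ^ 2 / (N : ℝ) ^ 2 + ε ^ 2 ≤ ((t:ℝ)) ^ 2 / (N : ℝ) ^ 2 + ε ^ 2 := by
    have hsr : (0:ℝ) ≤ (s:ℝ) := by exact_mod_cast hs
    have hstr : (s:ℝ) ≤ (t:ℝ) := by exact_mod_cast hst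
    have : (s:ℝ)^2 ≤ (t:ℝ)^2 := by nlinarith
    have hN2 : (0:ℝ) < (N:ℝ)^2 := by positivity
    gcongr
  apply div_le_div_of_nonneg_left (by positivity) (by positivity) hd

/-- Summation by parts bound for the eigenvalues of R^{(ε)}. -/
theorem eigenvalue_summation_by_parts (ε : ℝ) (hε : 0 < ε) :
    ∃ c : ℝ, 0 < c ∧ ∀ (N : ℕ), 1 ≤ N → ∀ k ∈ Finset.Icc (1 : ℤ) (2 * (N : ℤ) - 1),
      ‖nuEig ε N k‖ ≤
        c / ((N : ℝ) *
          ‖1 - Complex.exp (Complex.I * 2 * (π : ℂ) * (k : ℂ) / (2 * (N : ℂ)))‖) := by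
  refine ⟨2 * ε ^ ((2:ℝ)/3) / ε ^ 2, by positivity, ?_⟩
  intro N hN k hk
  rw [Finset.mem_Icc] at hk
  have hNR : (0:ℝ) < (N:ℝ) := by exact_mod_cast hN
  have hNC : (2 * (N:ℂ)) ≠ 0 := by
    simp only [ne_eq, mul_eq_zero]
    push_neg
    exact ⟨two_ne_zero, by exact_mod_cast hNR.ne'⟩
  set ω : ℂ := Complex.exp (Complex.I * 2 * (π : ℂ) * (k : ℂ) / (2 * (N : ℂ))) with hωdef
  -- |ω| = 1
  have habsω : ‖ω‖ = 1 := by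
    have harg : Complex.I * 2 * (π : ℂ) * (k : ℂ) / (2 * (N : ℂ))
        = ((2*π*(k:ℝ)/(2*(N:ℝ)) : ℝ) : ℂ) * Complex.I := by
      have h2N : ((2*(N:ℝ) : ℝ) : ℂ) ≠ 0 := by
        exact_mod_cast (by positivity : (2*(N:ℝ)) ≠ 0)
      push_cast
      field_simp
    rw [hωdef, harg, Complex.norm_exp_ofReal_mul_I]
  -- ω ≠ 1
  have hω1 : ω ≠ 1 := by
    rw [hωdef]
    intro h
    rw [Complex.exp_eq_one_iff] at h
    obtain ⟨n, hn⟩ := h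
    have h2 : ((2:ℂ) * (π:ℂ) * Complex.I) ≠ 0 :=
      mul_ne_zero (mul_ne_zero two_ne_zero (Complex.ofReal_ne_zero.mpr Real.pi_ne_zero))
        Complex.I_ne_zero
    field_simp at hn
    have h3 : ((2:ℂ) * (π:ℂ) * Complex.I) * ((k:ℂ) - 2*(N:ℂ)*n) = 0 := by
      rw [div_eq_iff (by exact_mod_cast hNR.ne')] at hn
      linear_combination (2*(π:ℂ)*Complex.I) * hn
    rcases mul_eq_zero.1 h3 with h4 | h4
    · exact h2 h4
    · have h5 : (k:ℂ) = ((2*(N:ℤ)*n : ℤ) : ℂ) := by push_cast; linear_combination h4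
      have hkn : k = 2*(N:ℤ)*n := by exact_mod_cast h5
      rcases le_or_gt n 0 with hn0 | hn0
      · nlinarith [hk.1, hk.2, hNR]
      · have : (1:ℤ) ≤ n := hn0
        nlinarith [hk.1, hk.2]
  have hpos : 0 < ‖1 - ω‖ := by
    rw [norm_pos_iff]
    intro h
    exact hω1 (by linear_combination -h)
  -- ν as a power sum
  have hnu : nuEig ε N k = ∑ j ∈ Finset.range (2*N), ω ^ j * ((Rmat ε N 0 (j:ℤ) : ℝ) : ℂ) := by
    unfold nuEig
    refine Finset.sum_congr rfl fun j _ => ?_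
    congr 1
    rw [hωdef, ← Complex.exp_nat_mul]
    congr 1
    ring
  have hω2N : ω ^ (2*N) = 1 := by
    rw [hωdef, ← Complex.exp_nat_mul]
    have h : ((2*N : ℕ) : ℂ) * (Complex.I * 2 * (π:ℂ) * (k:ℂ) / (2 * (N:ℂ)))
        = (k:ℂ) * (2 * (π:ℂ) * Complex.I) := by
      push_cast
      rw [mul_div_assoc', div_eq_iff hNC]
      ring
    rw [h, Complex.exp_int_mul_two_pi_mul_I]
  -- shifted sum
  set F : ℕ → ℂ := fun m => ω ^ m * ((Rmat ε N 0 ((m:ℤ) - 1) : ℝ) : ℂ) with hFdef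
  have hF20 : F (2*N) = F 0 := by
    simp only [hFdef]
    rw [hω2N, pow_zero]
    congr 2
    have e1 : ((2*N:ℕ):ℤ) - 1 = 2*(N:ℤ) - 1 := by push_cast; ring
    have e2 : ((0:ℕ):ℤ) - 1 = -1 := by norm_num
    rw [e1, e2, Rmat_neg_one ε N hN, Rmat_high ε N hN _ (by omega) (by omega)]
    congr 1
    ring
  have hshift : ∑ j ∈ Finset.range (2*N), ω ^ (j+1) * ((Rmat ε N 0 (j:ℤ) : ℝ) : ℂ)
      = ∑ j ∈ Finset.range (2*N), F j := by
    have h3 : ∀ j : ℕ, F (j+1) = ω ^ (j+1) * ((Rmat ε N 0 (j:ℤ) : ℝ) : ℂ) := by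
      intro j
      simp only [hFdef]
      congr 3
      push_cast
      ring
    calc ∑ j ∈ Finset.range (2*N), ω ^ (j+1) * ((Rmat ε N 0 (j:ℤ) : ℝ) : ℂ)
        = ∑ j ∈ Finset.range (2*N), F (j+1) := by
          exact Finset.sum_congr rfl fun j _ => (h3 j).symm
      _ = ∑ j ∈ Finset.range (2*N+1), F j - F 0 := by
          rw [Finset.sum_range_succ' F (2*N)]; ring
      _ = ∑ j ∈ Finset.range (2*N), F j + F (2*N) - F 0 := by
          rw [Finset.sum_range_succ F (2*N)]
      _ = ∑ j ∈ Finset.range (2*N), F j := by rw [hF20]; ring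
  have key : (1 - ω) * nuEig ε N k
      = ∑ j ∈ Finset.range (2*N),
          ω ^ j * (((Rmat ε N 0 (j:ℤ) - Rmat ε N 0 ((j:ℤ)-1)) : ℝ) : ℂ) := by
    rw [hnu, sub_mul, one_mul]
    have hmul : ω * ∑ j ∈ Finset.range (2*N), ω ^ j * ((Rmat ε N 0 (j:ℤ) : ℝ) : ℂ)
        = ∑ j ∈ Finset.range (2*N), ω ^ (j+1) * ((Rmat ε N 0 (j:ℤ) : ℝ) : ℂ) := by
      rw [Finset.mul_sum]
      exact Finset.sum_congr rfl fun j _ => by ring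
    rw [hmul, hshift, ← Finset.sum_sub_distrib]
    refine Finset.sum_congr rfl fun j _ => ?_
    simp only [hFdef]
    push_cast
    ring
  -- total variation bound
  set G : ℤ → ℝ := fun t => gfun ε N t with hGdef
  set t : ℕ → ℝ := fun j => |Rmat ε N 0 (j:ℤ) - Rmat ε N 0 ((j:ℤ)-1)| with htdef
  have hS1 : ∑ j ∈ Finset.range (N+1), t j = (G 0 - G (N:ℤ)) + (G 0 - G 1) := by
    rw [Finset.sum_range_succ' t N]
    have ht0 : t 0 = G 0 - G 1 := by
      simp only [htdef, hGdef]
      rw [show ((0:ℕ):ℤ) - 1 = -1 by norm_num,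
        show ((0:ℕ):ℤ) = (0:ℤ) by norm_num,
        Rmat_low ε N hN 0 le_rfl (by exact_mod_cast Nat.zero_le N), Rmat_neg_one ε N hN]
      exact abs_of_nonneg (sub_nonneg.2 (gfun_anti ε hε N hN le_rfl zero_le_one))
    have hterm : ∀ i ∈ Finset.range N, t (i+1) =
        (fun m : ℕ => G (m:ℤ)) i - (fun m : ℕ => G (m:ℤ)) (i+1) := by
      intro i hi
      rw [Finset.mem_range] at hi
      simp only [htdef, hGdef]
      have e1 : Rmat ε N 0 ((i+1:ℕ):ℤ) = gfun ε N ((i:ℤ)+1) := by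
        rw [Rmat_low ε N hN _ (by omega) (by omega)]
        congr 1
      have e2 : Rmat ε N 0 (((i+1:ℕ):ℤ) - 1) = gfun ε N (i:ℤ) := by
        rw [show ((i+1:ℕ):ℤ) - 1 = (i:ℤ) by push_cast; ring]
        exact Rmat_low ε N hN _ (by omega) (by omega)
      rw [e1, e2, abs_sub_comm,
        abs_of_nonneg (sub_nonneg.2 (gfun_anti ε hε N hN (by omega) (by omega)))]
      push_cast
      ring
    rw [Finset.sum_congr rfl hterm, Finset.sum_range_sub' (fun m : ℕ => G (m:ℤ)) N, ht0]
    norm_num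
  have hS2 : ∑ j ∈ Finset.Ico (N+1) (2*N), t j = G 1 - G (N:ℤ) := by
    rw [Finset.sum_Ico_eq_sum_range]
    rw [show 2*N - (N+1) = N - 1 by omega]
    have hterm : ∀ i ∈ Finset.range (N-1), t (N+1+i) =
        (fun m : ℕ => G ((N:ℤ) - m)) (i+1) - (fun m : ℕ => G ((N:ℤ) - m)) i := by
      intro i hi
      rw [Finset.mem_range] at hi
      simp only [htdef, hGdef]
      have e1 : Rmat ε N 0 ((N+1+i:ℕ):ℤ) = gfun ε N ((N:ℤ) - ((i:ℤ)+1)) := by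
        rw [Rmat_high ε N hN _ (by push_cast; omega) (by push_cast; omega)]
        congr 1
        push_cast; ring
      have e2 : Rmat ε N 0 (((N+1+i:ℕ):ℤ) - 1) = gfun ε N ((N:ℤ) - (i:ℤ)) := by
        rw [show ((N+1+i:ℕ):ℤ) - 1 = ((N+i:ℕ):ℤ) by push_cast; ring]
        rw [Rmat_high ε N hN _ (by push_cast; omega) (by push_cast; omega)]
        congr 1
        push_cast; ring
      rw [e1, e2,
        abs_of_nonneg (sub_nonneg.2 (gfun_anti ε hε N hN (by omega) (by omega)))]
      push_cast
      ring
    rw [Finset.sum_congr rfl hterm, Finset.sum_range_sub (fun m : ℕ => G ((N:ℤ) - m)) (N-1)]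
    have e3 : ((N:ℤ) - ((N-1:ℕ):ℤ)) = 1 := by omega
    have e4 : ((N:ℤ) - ((0:ℕ):ℤ)) = (N:ℤ) := by norm_num
    rw [e3, e4]
  have hTV : ∑ j ∈ Finset.range (2*N), t j ≤ 2 * G 0 := by
    rw [← Finset.sum_range_add_sum_Ico t (show N+1 ≤ 2*N by omega), hS1, hS2]
    have := gfun_nonneg ε hε N (N:ℤ)
    simp only [hGdef]
    linarith
  -- assemble
  have habs : ‖nuEig ε N k‖ * ‖1 - ω‖ ≤ 2 * G 0 := by
    rw [← norm_mul, mul_comm (nuEig ε N k) (1-ω), key]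
    refine le_trans (norm_sum_le _ _) (le_trans (le_of_eq ?_) hTV)
    refine Finset.sum_congr rfl fun j _ => ?_
    rw [norm_mul, norm_pow, habsω, one_pow, one_mul, Complex.norm_real, Real.norm_eq_abs]
  have hG0 : 2 * G 0 = (2 * ε ^ ((2:ℝ)/3) / ε ^ 2) / (N:ℝ) := by
    simp only [hGdef]
    unfold gfun
    push_cast
    rw [show ((0:ℝ))^2 / (N:ℝ)^2 = 0 by norm_num]
    field_simp
    ring
  rw [le_div_iff₀ (mul_pos hNR hpos)]
  have h7 := mul_le_mul_of_nonneg_right habs hNR.le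
  rw [hG0] at h7
  have h8 : (2 * ε ^ ((2:ℝ)/3) / ε ^ 2) / (N:ℝ) * (N:ℝ) = 2 * ε ^ ((2:ℝ)/3) / ε ^ 2 :=
    div_mul_cancel₀ _ hNR.ne'
  nlinarith [h7, h8]
end
end
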